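/- With F, G, I, H and the tiles A_μ(±), C_μ(±) as defined, for every μ ∈ ℤ the map H restricts to a homeomorphism from A_μ(+) onto C_μ(+) and from A_μ(−) onto C_μ(−); in particular H(A_μ(+)) = C_μ(+) and H(A_μ(−)) = C_μ(−). -/

import Mathlib

open Complex Set Metric Filter Topology

/-- The tile `A_μ(+)` of the fundamental model:
`{W ∈ ℂ ∖ I : R^{μ+1} a ≤ |W − a| ≤ R^μ a, Im W ≥ 0}`. -/
def tileAplus (R a : ℝ) (I : Set ℂ) (μ : ℤ) : Set ℂ :=
  {W : ℂ | W ∉ I ∧ R ^ (μ + 1) * a ≤ ‖W - (a : ℂ)‖ ∧ ‖W - (a : ℂ)‖ ≤ R ^ μ * a ∧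
    0 ≤ W.im}

/-- The tile `A_μ(−)` of the fundamental model. -/
def tileAminus (R a : ℝ) (I : Set ℂ) (μ : ℤ) : Set ℂ :=
  {W : ℂ | W ∉ I ∧ R ^ (μ + 1) * a ≤ ‖W - (a : ℂ)‖ ∧ ‖W - (a : ℂ)‖ ≤ R ^ μ * a ∧
    W.im ≤ 0}

/-- The tile `C_μ(+) = {μ ≤ Re W ≤ μ+1, Im W ≥ 0}` of the fundamental model. -/
def tileCplus (μ : ℤ) : Set ℂ :=
  {W : ℂ | (μ : ℝ) ≤ W.re ∧ W.re ≤ (μ : ℝ) + 1 ∧ 0 ≤ W.im}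

/-- The tile `C_μ(−) = {μ ≤ Re W ≤ μ+1, Im W ≤ 0}` of the fundamental model. -/
def tileCminus (μ : ℤ) : Set ℂ :=
  {W : ℂ | (μ : ℝ) ≤ W.re ∧ W.re ≤ (μ : ℝ) + 1 ∧ W.im ≤ 0}


noncomputable def fwdMap (R a : ℝ) (W : ℂ) : ℂ :=
  (((Real.log ‖W - (a : ℂ)‖ - Real.log a) / Real.log R : ℝ) : ℂ) +
  ((2 * a * ((W - (a : ℂ)).im / (‖W - (a : ℂ)‖ - (W - (a : ℂ)).re)) : ℝ) : ℂ) * Complex.I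

noncomputable def bwdMap (R a : ℝ) (v : ℂ) : ℂ :=
  (a : ℂ) + ((a * Real.exp (v.re * Real.log R) : ℝ) : ℂ) *
    ((((v.im/(2*a))^2 - 1) / ((v.im/(2*a))^2 + 1) : ℝ) +
     ((2*(v.im/(2*a)) / ((v.im/(2*a))^2 + 1) : ℝ) : ℂ) * Complex.I)

lemma fwd_re (R a : ℝ) (W : ℂ) :
    (fwdMap R a W).re = (Real.log ‖W - (a : ℂ)‖ - Real.log a) / Real.log R := by
  unfold fwdMap
  simp only [Complex.add_re, Complex.ofReal_re, Complex.mul_re, Complex.I_re, Complex.I_im,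
    Complex.ofReal_im]
  ring

lemma fwd_im (R a : ℝ) (W : ℂ) :
    (fwdMap R a W).im = 2 * a * ((W - (a : ℂ)).im / (‖W - (a : ℂ)‖ - (W - (a : ℂ)).re)) := by
  unfold fwdMap
  simp only [Complex.add_im, Complex.ofReal_im, Complex.mul_im, Complex.I_re, Complex.I_im,
    Complex.ofReal_re]
  ring

lemma d_pos {z : ℂ} (h0 : z ≠ 0) (h1 : z.im = 0 → z.re < 0) : 0 < ‖z‖ - z.re := by
  rcases eq_or_ne z.im 0 with h | h
  · have h2 := h1 h
    have h3 : (0:ℝ) ≤ ‖z‖ := norm_nonneg z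
    linarith
  · have h4 := Complex.abs_re_lt_norm.2 h
    rcases abs_lt.1 h4 with ⟨l, r⟩
    linarith

lemma sq_norm (z : ℂ) : ‖z‖^2 = z.re^2 + z.im^2 := by
  rw [Complex.sq_norm, Complex.normSq_apply]; ring

lemma key_frac {n r m : ℝ} (hn : 0 < n) (hd : 0 < n - r) (hsq : m^2 = n^2 - r^2) :
    ((m/(n-r))^2 - 1) / ((m/(n-r))^2 + 1) = r/n ∧
    2*(m/(n-r)) / ((m/(n-r))^2 + 1) = m/n := by
  have hd' : n - r ≠ 0 := ne_of_gt hd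
  have e1 : (m/(n-r))^2 - 1 = (m^2 - (n-r)^2)/(n-r)^2 := by
    rw [div_pow, div_sub_one (by positivity)]
  have e2 : (m/(n-r))^2 + 1 = (m^2 + (n-r)^2)/(n-r)^2 := by
    rw [div_pow, div_add_one (by positivity)]
  have hden : m^2 + (n-r)^2 ≠ 0 := by nlinarith
  constructor
  · rw [e1, e2, div_div_div_cancel_right₀ (by positivity : (n-r)^2 ≠ 0), div_eq_div_iff hden hn.ne']
    linear_combination (n - r) * hsq
  · have e3 : 2*(m/(n-r)) = 2*m*(n-r)/(n-r)^2 := by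
      field_simp
    rw [e3, e2, div_div_div_cancel_right₀ (by positivity : (n-r)^2 ≠ 0), div_eq_div_iff hden hn.ne']
    linear_combination (-m) * hsq

lemma bwd_fwd (R a : ℝ) (hR0 : 0 < R) (hR1 : R < 1) (ha0 : 0 < a)
    {z : ℂ} (h0 : z ≠ 0) (h1 : z.im = 0 → z.re < 0) :
    bwdMap R a (fwdMap R a ((a:ℂ) + z)) = (a:ℂ) + z := by
  have hz : (a:ℂ) + z - (a:ℂ) = z := by ring
  have hd : 0 < ‖z‖ - z.re := d_pos h0 h1
  have hd' : ‖z‖ - z.re ≠ 0 := ne_of_gt hd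
  have hn : 0 < ‖z‖ := norm_pos_iff.2 h0
  have hlogR : Real.log R ≠ 0 := ne_of_lt (Real.log_neg hR0 hR1)
  have him : (fwdMap R a ((a:ℂ) + z)).im / (2*a) = z.im / (‖z‖ - z.re) := by
    rw [fwd_im, hz]
    rw [mul_div_cancel_left₀ _ (by positivity : 2*a ≠ 0)]
  have hre : a * Real.exp ((fwdMap R a ((a:ℂ) + z)).re * Real.log R) = ‖z‖ := by
    rw [fwd_re, hz, div_mul_cancel₀ _ hlogR, Real.exp_sub, Real.exp_log hn, Real.exp_log ha0]
    field_simp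
  have hsq : z.im^2 = ‖z‖^2 - z.re^2 := by have := sq_norm z; linarith
  obtain ⟨hc, hs⟩ := key_frac hn hd hsq
  rw [bwdMap, him, hre, hc, hs]
  have hnn : ((‖z‖ : ℝ) : ℂ) ≠ 0 := by exact_mod_cast ne_of_gt hn
  congr 1
  push_cast
  rw [mul_add, mul_div_cancel₀ _ hnn, ← mul_assoc, mul_div_cancel₀ _ hnn]
  exact Complex.re_add_im z

lemma csq (u : ℝ) : ((u^2-1)/(u^2+1))^2 + (2*u/(u^2+1))^2 = 1 := by
  have h : u^2+1 ≠ 0 := by positivity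
  field_simp
  ring

lemma norm_cs {c s : ℝ} (h : c^2 + s^2 = 1) : ‖((c:ℂ) + (s:ℂ) * Complex.I)‖ = 1 := by
  have h1 : ‖((c:ℂ) + (s:ℂ) * Complex.I)‖^2 = c^2 + s^2 := by
    rw [sq_norm]
    simp only [Complex.add_re, Complex.add_im, Complex.ofReal_re, Complex.ofReal_im,
      Complex.mul_re, Complex.mul_im, Complex.I_re, Complex.I_im]
    ring
  rw [h] at h1
  have h2 := norm_nonneg ((c:ℂ) + (s:ℂ) * Complex.I)
  nlinarith

lemma bwd_sub (R a : ℝ) (v : ℂ) :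
    bwdMap R a v - (a:ℂ) = ((a * Real.exp (v.re * Real.log R) : ℝ) : ℂ) *
      ((((v.im/(2*a))^2 - 1) / ((v.im/(2*a))^2 + 1) : ℝ) +
       ((2*(v.im/(2*a)) / ((v.im/(2*a))^2 + 1) : ℝ) : ℂ) * Complex.I) := by
  unfold bwdMap; ring

lemma bwd_sub_re (R a : ℝ) (v : ℂ) :
    (bwdMap R a v - (a:ℂ)).re =
      (a * Real.exp (v.re * Real.log R)) * (((v.im/(2*a))^2 - 1) / ((v.im/(2*a))^2 + 1)) := by
  rw [bwd_sub]
  simp only [Complex.mul_re, Complex.add_re, Complex.add_im, Complex.ofReal_re,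
    Complex.ofReal_im, Complex.mul_re, Complex.mul_im, Complex.I_re, Complex.I_im]
  ring

lemma bwd_sub_im (R a : ℝ) (v : ℂ) :
    (bwdMap R a v - (a:ℂ)).im =
      (a * Real.exp (v.re * Real.log R)) * (2*(v.im/(2*a)) / ((v.im/(2*a))^2 + 1)) := by
  rw [bwd_sub]
  simp only [Complex.mul_im, Complex.add_re, Complex.add_im, Complex.ofReal_re,
    Complex.ofReal_im, Complex.mul_re, Complex.mul_im, Complex.I_re, Complex.I_im]
  ring

lemma bwd_norm (R a : ℝ) (ha0 : 0 < a) (v : ℂ) :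
    ‖bwdMap R a v - (a:ℂ)‖ = a * Real.exp (v.re * Real.log R) := by
  rw [bwd_sub, norm_mul, norm_cs (csq (v.im/(2*a))), mul_one, Complex.norm_real, Real.norm_eq_abs,
    abs_of_pos (by positivity)]

lemma fwd_bwd (R a : ℝ) (hR0 : 0 < R) (hR1 : R < 1) (ha0 : 0 < a) (v : ℂ) :
    fwdMap R a (bwdMap R a v) = v := by
  have hlogR : Real.log R ≠ 0 := ne_of_lt (Real.log_neg hR0 hR1)
  set u : ℝ := v.im/(2*a) with hu
  set ρ : ℝ := a * Real.exp (v.re * Real.log R) with hρ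
  have hρ0 : 0 < ρ := by positivity
  have hu1 : u^2 + 1 ≠ 0 := by positivity
  apply Complex.ext
  · rw [fwd_re, bwd_norm R a ha0, ← hρ, hρ, Real.log_mul ha0.ne' (Real.exp_ne_zero _),
      Real.log_exp]
    field_simp
    ring
  · rw [fwd_im, bwd_sub_im, bwd_norm R a ha0, bwd_sub_re, ← hρ, ← hu]
    have hden : ρ - ρ * ((u^2-1)/(u^2+1)) = ρ * 2 / (u^2+1) := by
      field_simp; ring
    rw [hden, hu]
    field_simp

lemma tan_pi_sub_half (t : ℝ) (h0 : 0 < t) (h2 : t < 2 * Real.pi) :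
    Real.tan ((Real.pi - t) / 2) = Real.sin t / (1 - Real.cos t) := by
  have hs : 0 < Real.sin (t/2) := Real.sin_pos_of_pos_of_lt_pi (by linarith) (by linarith)
  have h1 : (Real.pi - t)/2 = Real.pi/2 - t/2 := by ring
  rw [h1, Real.tan_pi_div_two_sub, Real.tan_eq_sin_div_cos, inv_div]
  have hsin : Real.sin t = 2 * Real.sin (t/2) * Real.cos (t/2) := by
    have h := Real.sin_two_mul (t/2); rw [show 2*(t/2) = t by ring] at h; linarith
  have hcos : 1 - Real.cos t = 2 * Real.sin (t/2)^2 := by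
    have h := Real.cos_two_mul' (t/2)
    have h2 := Real.sin_sq_add_cos_sq (t/2)
    rw [show 2*(t/2) = t by ring] at h; nlinarith
  rw [hsin, hcos]
  field_simp

lemma H_agree (R a : ℝ) (hR0 : 0 < R) (hR1 : R < 1) (ha0 : 0 < a)
    (H : ℂ → ℂ)
    (hH : ∀ ρ t : ℝ, 0 < ρ → 0 < t → t < 2 * Real.pi →
      H ((a : ℂ) + (ρ : ℂ) * Complex.exp ((t : ℂ) * Complex.I)) =
        (((Real.log ρ - Real.log a) / Real.log R : ℝ) : ℂ) +
        ((2 * a * Real.tan ((Real.pi - t) / 2) : ℝ) : ℂ) * Complex.I)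
    {z : ℂ} (h0 : z ≠ 0) (h1 : z.im = 0 → z.re < 0) :
    H ((a:ℂ) + z) = fwdMap R a ((a:ℂ) + z) := by
  have hn : 0 < ‖z‖ := norm_pos_iff.2 h0
  have hπ := Real.pi_pos
  have harg1 := Complex.neg_pi_lt_arg z
  have harg2 := Complex.arg_le_pi z
  set t : ℝ := if z.im < 0 then z.arg + 2 * Real.pi else z.arg with ht
  have ht0 : 0 < t := by
    rw [ht]; split_ifs with h
    · linarith
    · push_neg at h
      rcases eq_or_lt_of_le h with h' | h'
      · have : z.arg = Real.pi := Complex.arg_eq_pi_iff.2 ⟨h1 h'.symm, h'.symm⟩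
        linarith
      · have hnn : 0 ≤ z.arg := Complex.arg_nonneg_iff.2 h
        rcases eq_or_lt_of_le hnn with h'' | h''
        · exfalso
          have := (Complex.arg_eq_zero_iff.1 h''.symm).2
          linarith
        · exact h''
  have ht2 : t < 2 * Real.pi := by
    rw [ht]; split_ifs with h
    · have : z.arg < 0 := Complex.arg_neg_iff.2 h
      linarith
    · linarith
  have hcos : Real.cos t = z.re / ‖z‖ := by
    rw [ht]
    split_ifs with h
    · rw [Real.cos_add_two_pi, Complex.cos_arg h0]
    · rw [Complex.cos_arg h0]
  have hsin : Real.sin t = z.im / ‖z‖ := by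
    rw [ht]
    split_ifs with h
    · rw [Real.sin_add_two_pi, Complex.sin_arg]
    · rw [Complex.sin_arg]
  have hexp : Complex.exp ((t:ℂ) * Complex.I) = Complex.exp ((z.arg : ℂ) * Complex.I) := by
    rw [ht]
    split_ifs with h
    · push_cast
      rw [add_mul, Complex.exp_add, Complex.exp_two_pi_mul_I, mul_one]
    · rfl
  have hW : (a:ℂ) + ((‖z‖ : ℝ) : ℂ) * Complex.exp ((t:ℂ) * Complex.I) = (a:ℂ) + z := by
    rw [hexp]
    congr 1
    exact Complex.norm_mul_exp_arg_mul_I z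
  rw [← hW, hH ‖z‖ t hn ht0 ht2]
  unfold fwdMap
  rw [hW, add_sub_cancel_left]
  congr 2
  rw [tan_pi_sub_half t ht0 ht2, hsin, hcos, one_sub_div hn.ne',
    div_div_div_cancel_right₀ hn.ne']

lemma fwd_contAt (R a : ℝ) {W : ℂ} (h0 : W - (a:ℂ) ≠ 0)
    (hd : ‖W - (a:ℂ)‖ - (W - (a:ℂ)).re ≠ 0) :
    ContinuousAt (fwdMap R a) W := by
  have hz : Continuous (fun W : ℂ => W - (a:ℂ)) := continuous_id.sub continuous_const
  have hnorm : Continuous (fun W : ℂ => ‖W - (a:ℂ)‖) := hz.norm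
  have hlog : ContinuousAt (fun W : ℂ => Real.log ‖W - (a:ℂ)‖) W :=
    ContinuousAt.comp (g := Real.log) (Real.continuousAt_log (norm_ne_zero_iff.2 h0))
      hnorm.continuousAt
  have him : Continuous (fun W : ℂ => (W - (a:ℂ)).im) := Complex.continuous_im.comp hz
  have hre : Continuous (fun W : ℂ => (W - (a:ℂ)).re) := Complex.continuous_re.comp hz
  have hdiv : ContinuousAt
      (fun W : ℂ => (W - (a:ℂ)).im / (‖W - (a:ℂ)‖ - (W - (a:ℂ)).re)) W :=
    him.continuousAt.div ((hnorm.sub hre).continuousAt) hd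
  unfold fwdMap
  exact (ContinuousAt.comp (g := (Complex.ofReal : ℝ → ℂ))
      Complex.continuous_ofReal.continuousAt
      ((hlog.sub continuousAt_const).div_const _)).add
    ((ContinuousAt.comp (g := (Complex.ofReal : ℝ → ℂ))
      Complex.continuous_ofReal.continuousAt
      (continuousAt_const.mul hdiv)).mul continuousAt_const)

lemma bwd_cont (R a : ℝ) : Continuous (bwdMap R a) := by
  have hu : Continuous (fun v : ℂ => v.im / (2*a)) := Complex.continuous_im.div_const _
  have hden : ∀ v : ℂ, (v.im/(2*a))^2 + 1 ≠ 0 := fun v => by positivity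
  have hc : Continuous (fun v : ℂ => ((v.im/(2*a))^2 - 1) / ((v.im/(2*a))^2 + 1)) :=
    ((hu.pow 2).sub continuous_const).div ((hu.pow 2).add continuous_const) hden
  have hs : Continuous (fun v : ℂ => 2*(v.im/(2*a)) / ((v.im/(2*a))^2 + 1)) :=
    (continuous_const.mul hu).div ((hu.pow 2).add continuous_const) hden
  have hexp : Continuous (fun v : ℂ => a * Real.exp (v.re * Real.log R)) :=
    continuous_const.mul (Real.continuous_exp.comp (Complex.continuous_re.mul continuous_const))
  unfold bwdMap
  exact continuous_const.add ((Complex.continuous_ofReal.comp hexp).mul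
    ((Complex.continuous_ofReal.comp hc).add
      ((Complex.continuous_ofReal.comp hs).mul continuous_const)))

lemma zpow_exp_log (R : ℝ) (hR0 : 0 < R) (n : ℤ) :
    R ^ n = Real.exp (n * Real.log R) := by
  rw [← Real.log_zpow, Real.exp_log (zpow_pos hR0 n)]

lemma fwd_re_bounds (R a : ℝ) (hR0 : 0 < R) (hR1 : R < 1) (ha0 : 0 < a) (μ : ℤ) {W : ℂ}
    (h0 : W - (a:ℂ) ≠ 0)
    (hlo : R ^ (μ+1) * a ≤ ‖W - (a:ℂ)‖) (hhi : ‖W - (a:ℂ)‖ ≤ R ^ μ * a) :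
    (μ:ℝ) ≤ (fwdMap R a W).re ∧ (fwdMap R a W).re ≤ (μ:ℝ) + 1 := by
  have hn : 0 < ‖W - (a:ℂ)‖ := norm_pos_iff.2 h0
  have hlogR : Real.log R < 0 := Real.log_neg hR0 hR1
  have hRp : ∀ n : ℤ, (0:ℝ) < R ^ n := fun n => zpow_pos hR0 n
  have llo : (μ+1 : ℤ) * Real.log R + Real.log a ≤ Real.log ‖W - (a:ℂ)‖ := by
    calc (μ+1 : ℤ) * Real.log R + Real.log a = Real.log (R ^ (μ+1) * a) := by
          rw [Real.log_mul (ne_of_gt (hRp _)) ha0.ne', Real.log_zpow]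
      _ ≤ _ := Real.log_le_log (by positivity) hlo
  have lhi : Real.log ‖W - (a:ℂ)‖ ≤ (μ : ℤ) * Real.log R + Real.log a := by
    calc Real.log ‖W - (a:ℂ)‖ ≤ Real.log (R ^ μ * a) := Real.log_le_log hn hhi
      _ = _ := by rw [Real.log_mul (ne_of_gt (hRp _)) ha0.ne', Real.log_zpow]
  rw [fwd_re]
  constructor
  · rw [le_div_iff_of_neg hlogR]
    push_cast at lhi ⊢
    linarith
  · rw [div_le_iff_of_neg hlogR]
    push_cast at llo ⊢
    linarith

lemma homeo_of {A C : Set ℂ} {f g : ℂ → ℂ} (hf : Set.MapsTo f A C) (hg : Set.MapsTo g C A)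
    (hgf : ∀ w ∈ A, g (f w) = w) (hfg : ∀ v ∈ C, f (g v) = v)
    (hfc : ContinuousOn f A) (hgc : Continuous g) :
    ∃ e : A ≃ₜ C, ∀ w : A, (e w : ℂ) = f (w : ℂ) :=
  ⟨{ toFun := fun w => ⟨f w, hf w.2⟩,
     invFun := fun v => ⟨g v, hg v.2⟩,
     left_inv := fun w => Subtype.ext (hgf w w.2),
     right_inv := fun v => Subtype.ext (hfg v v.2),
     continuous_toFun := Continuous.subtype_mk hfc.restrict _,
     continuous_invFun := Continuous.subtype_mk (hgc.comp continuous_subtype_val) _ },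
   fun _ => rfl⟩

lemma tile_side (R a : ℝ) (hR0 : 0 < R) (hR1 : R < 1) (ha0 : 0 < a)
    (I : Set ℂ) (hI : I = {w : ℂ | w.im = 0 ∧ a ≤ w.re})
    (H : ℂ → ℂ)
    (hH : ∀ ρ t : ℝ, 0 < ρ → 0 < t → t < 2 * Real.pi →
      H ((a : ℂ) + (ρ : ℂ) * Complex.exp ((t : ℂ) * Complex.I)) =
        (((Real.log ρ - Real.log a) / Real.log R : ℝ) : ℂ) +
        ((2 * a * Real.tan ((Real.pi - t) / 2) : ℝ) : ℂ) * Complex.I)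
    (μ : ℤ) (P : ℝ → Prop) (hS : ∀ c x : ℝ, 0 < c → P x → P (c * x)) :
    (∃ e : ({W : ℂ | W ∉ I ∧ R ^ (μ + 1) * a ≤ ‖W - (a : ℂ)‖ ∧
          ‖W - (a : ℂ)‖ ≤ R ^ μ * a ∧ P W.im} : Set ℂ) ≃ₜ
        ({W : ℂ | (μ : ℝ) ≤ W.re ∧ W.re ≤ (μ : ℝ) + 1 ∧ P W.im} : Set ℂ),
      ∀ w : ({W : ℂ | W ∉ I ∧ R ^ (μ + 1) * a ≤ ‖W - (a : ℂ)‖ ∧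
          ‖W - (a : ℂ)‖ ≤ R ^ μ * a ∧ P W.im} : Set ℂ), (e w : ℂ) = H (w : ℂ)) ∧
    H '' {W : ℂ | W ∉ I ∧ R ^ (μ + 1) * a ≤ ‖W - (a : ℂ)‖ ∧
          ‖W - (a : ℂ)‖ ≤ R ^ μ * a ∧ P W.im} =
      {W : ℂ | (μ : ℝ) ≤ W.re ∧ W.re ≤ (μ : ℝ) + 1 ∧ P W.im} := by
  set A : Set ℂ := {W : ℂ | W ∉ I ∧ R ^ (μ + 1) * a ≤ ‖W - (a : ℂ)‖ ∧
      ‖W - (a : ℂ)‖ ≤ R ^ μ * a ∧ P W.im} with hA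
  set C : Set ℂ := {W : ℂ | (μ : ℝ) ≤ W.re ∧ W.re ≤ (μ : ℝ) + 1 ∧ P W.im} with hC
  have hlogR : Real.log R < 0 := Real.log_neg hR0 hR1
  have hsubim : ∀ W : ℂ, (W - (a:ℂ)).im = W.im := by
    intro W; simp [Complex.sub_im, Complex.ofReal_im]
  -- basic facts about points of A
  have hbase : ∀ W ∈ A, W - (a:ℂ) ≠ 0 ∧ ((W - (a:ℂ)).im = 0 → (W - (a:ℂ)).re < 0) ∧
      0 < ‖W - (a:ℂ)‖ - (W - (a:ℂ)).re := by
    intro W hW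
    obtain ⟨hni, hlo, hhi, hsgn⟩ := hW
    have h0 : W - (a:ℂ) ≠ 0 := by
      refine norm_pos_iff.1 (lt_of_lt_of_le ?_ hlo)
      have := zpow_pos hR0 (μ+1); positivity
    have h1 : (W - (a:ℂ)).im = 0 → (W - (a:ℂ)).re < 0 := by
      intro him0
      rw [hsubim] at him0
      have hre : ¬ a ≤ W.re := by
        intro hge; exact hni (by rw [hI]; exact ⟨him0, hge⟩)
      push_neg at hre
      simp only [Complex.sub_re, Complex.ofReal_re]
      linarith
    exact ⟨h0, h1, d_pos h0 h1⟩
  have hmapsf : Set.MapsTo (fwdMap R a) A C := by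
    intro W hW
    obtain ⟨h0, h1, hd⟩ := hbase W hW
    obtain ⟨hni, hlo, hhi, hsgn⟩ := hW
    obtain ⟨hb1, hb2⟩ := fwd_re_bounds R a hR0 hR1 ha0 μ h0 hlo hhi
    refine ⟨hb1, hb2, ?_⟩
    rw [fwd_im, hsubim]
    have heq : 2 * a * (W.im / (‖W - (a:ℂ)‖ - (W - (a:ℂ)).re)) =
        (2 * a / (‖W - (a:ℂ)‖ - (W - (a:ℂ)).re)) * W.im := by ring
    rw [heq]
    exact hS _ _ (by positivity) hsgn
  have hmapsg : Set.MapsTo (bwdMap R a) C A := by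
    intro v hv
    obtain ⟨hv1, hv2, hv3⟩ := hv
    set u : ℝ := v.im / (2*a) with hu
    set ρ : ℝ := a * Real.exp (v.re * Real.log R) with hρ
    have hρ0 : 0 < ρ := by positivity
    have hu1 : (0:ℝ) < u^2 + 1 := by positivity
    have hnorm : ‖bwdMap R a v - (a:ℂ)‖ = ρ := bwd_norm R a ha0 v
    have hWim : (bwdMap R a v).im = ρ * (2*u / (u^2+1)) := by
      rw [← hsubim (bwdMap R a v), bwd_sub_im]
    have hWre : (bwdMap R a v).re = a + ρ * ((u^2-1) / (u^2+1)) := by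
      have := bwd_sub_re R a v
      simp only [Complex.sub_re, Complex.ofReal_re] at this
      rw [← hρ, ← hu] at this
      linarith
    refine ⟨?_, ?_, ?_, ?_⟩
    · -- not in the slit I
      rw [hI]
      rintro ⟨him0, hre0⟩
      rw [hWim] at him0
      have hsz : 2*u / (u^2+1) = 0 := by
        rcases mul_eq_zero.1 him0 with h | h
        · exact absurd h hρ0.ne'
        · exact h
      have hu0 : u = 0 := by
        rcases div_eq_zero_iff.1 hsz with h | h
        · linarith
        · linarith
      rw [hWre, hu0] at hre0
      norm_num at hre0
      linarith
    · rw [hnorm, hρ, zpow_exp_log R hR0]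
      push_cast
      have : ((μ:ℝ) + 1) * Real.log R ≤ v.re * Real.log R :=
        mul_le_mul_of_nonpos_right hv2 hlogR.le
      calc Real.exp (((μ:ℝ)+1) * Real.log R) * a ≤ Real.exp (v.re * Real.log R) * a :=
            mul_le_mul_of_nonneg_right (Real.exp_le_exp.2 this) ha0.le
        _ = a * Real.exp (v.re * Real.log R) := by ring
    · rw [hnorm, hρ, zpow_exp_log R hR0]
      push_cast
      have : v.re * Real.log R ≤ (μ:ℝ) * Real.log R :=
        mul_le_mul_of_nonpos_right hv1 hlogR.le
      calc a * Real.exp (v.re * Real.log R) ≤ a * Real.exp ((μ:ℝ) * Real.log R) :=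
            mul_le_mul_of_nonneg_left (Real.exp_le_exp.2 this) ha0.le
        _ = Real.exp ((μ:ℝ) * Real.log R) * a := by ring
    · rw [hWim]
      have heq : ρ * (2*u / (u^2+1)) = (ρ / (a * (u^2+1))) * v.im := by
        rw [hu]; field_simp
      rw [heq]
      exact hS _ _ (by positivity) hv3
  have hgf : ∀ W ∈ A, bwdMap R a (fwdMap R a W) = W := by
    intro W hW
    obtain ⟨h0, h1, _⟩ := hbase W hW
    have := bwd_fwd R a hR0 hR1 ha0 h0 h1
    rwa [show (a:ℂ) + (W - (a:ℂ)) = W by ring] at this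
  have hfg : ∀ v ∈ C, fwdMap R a (bwdMap R a v) = v := fun v _ => fwd_bwd R a hR0 hR1 ha0 v
  have hcf : ContinuousOn (fwdMap R a) A := by
    intro W hW
    obtain ⟨h0, _, hd⟩ := hbase W hW
    exact (fwd_contAt R a h0 hd.ne').continuousWithinAt
  have hHf : ∀ W ∈ A, H W = fwdMap R a W := by
    intro W hW
    obtain ⟨h0, h1, _⟩ := hbase W hW
    have := H_agree R a hR0 hR1 ha0 H hH h0 h1
    rwa [show (a:ℂ) + (W - (a:ℂ)) = W by ring] at this
  constructor
  · obtain ⟨e, he⟩ := homeo_of hmapsf hmapsg hgf hfg hcf (bwd_cont R a)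
    exact ⟨e, fun w => (he w).trans (hHf w w.2).symm⟩
  · rw [Set.image_congr hHf]
    apply Set.Subset.antisymm
    · rintro v ⟨W, hW, rfl⟩
      exact hmapsf hW
    · intro v hv
      exact ⟨bwdMap R a v, hmapsg hv, hfg v hv⟩

/-- The conjugacy `H` of the fundamental model maps tiles to tiles (Section 4, Step 1):
for every `μ ∈ ℤ`, `H` restricts to a homeomorphism from `A_μ(+)` onto `C_μ(+)` and from
`A_μ(−)` onto `C_μ(−)`; in particular `H(A_μ(±)) = C_μ(±)`. -/
theorem fundamental_model_tiles
    (R : ℝ) (hR0 : 0 < R) (hR1 : R < 1)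
    (a : ℝ) (ha : a = 1 / (1 - R))
    (F G : ℂ → ℂ) (hF : ∀ W : ℂ, F W = (R : ℂ) * W + 1) (hG : ∀ W : ℂ, G W = W + 1)
    (I : Set ℂ) (hI : I = {w : ℂ | w.im = 0 ∧ a ≤ w.re})
    (H : ℂ → ℂ)
    (hH : ∀ ρ t : ℝ, 0 < ρ → 0 < t → t < 2 * Real.pi →
      H ((a : ℂ) + (ρ : ℂ) * Complex.exp ((t : ℂ) * Complex.I)) =
        (((Real.log ρ - Real.log a) / Real.log R : ℝ) : ℂ) +
        ((2 * a * Real.tan ((Real.pi - t) / 2) : ℝ) : ℂ) * Complex.I) :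
    ∀ μ : ℤ,
      (∃ e : (tileAplus R a I μ : Set ℂ) ≃ₜ (tileCplus μ : Set ℂ),
        ∀ w : (tileAplus R a I μ : Set ℂ), (e w : ℂ) = H (w : ℂ)) ∧
      (∃ e : (tileAminus R a I μ : Set ℂ) ≃ₜ (tileCminus μ : Set ℂ),
        ∀ w : (tileAminus R a I μ : Set ℂ), (e w : ℂ) = H (w : ℂ)) ∧
      H '' tileAplus R a I μ = tileCplus μ ∧
      H '' tileAminus R a I μ = tileCminus μ := by
  intro μ
  have ha0 : 0 < a := by
    have h1 : (0:ℝ) < 1 - R := by linarith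
    rw [ha]; positivity
  obtain ⟨hp, hip⟩ := tile_side R a hR0 hR1 ha0 I hI H hH μ (fun x => 0 ≤ x)
    (fun c x hc hx => mul_nonneg hc.le hx)
  obtain ⟨hm, him⟩ := tile_side R a hR0 hR1 ha0 I hI H hH μ (fun x => x ≤ 0)
    (fun c x hc hx => mul_nonpos_iff.2 (Or.inl ⟨hc.le, hx⟩))
  exact ⟨hp, hm, hip, him⟩
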